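/- Assume the antilinear system Σₐ is stabilizable, Q ∈ ℂ^{n×n} and R ∈ ℂ^{m×m} are Hermitian positive definite, and let P be the unique Hermitian positive definite solution of the anti-Riccati equation −Q = A₂^H P^# A₂ − A₂^H P^# B₂ (R + B₂^H P^# B₂)^{-1} B₂^H P^# A₂ − P. Then the iteration P(0) = Q, P(k+1) = Q + A₂^H (P(k)^{-#} + B₂ R^{-1} B₂^H)^{-1} A₂ is well defined (each P(k) is Hermitian positive definite) and P(k) → P entrywise as k → ∞. -/

import Mathlib

open Matrix Filter Topology
open scoped ENNReal ComplexOrder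

noncomputable section

/-- Entrywise complex conjugate of a matrix, `M^#`. -/
def mconj {k l : Type*} (A : Matrix k l ℂ) : Matrix k l ℂ := A.map (starRingEnd ℂ)

variable {n m : ℕ}

/-- The antilinear system `x(k+1) = A₂^# x^#(k) + B₂^# u^#(k)` is stabilizable if some
feedback `u(k) = K₁x(k) + K₂^#x^#(k)` drives every closed-loop solution to zero. -/
def AntiStabilizable (A₂ : Matrix (Fin n) (Fin n) ℂ) (B₂ : Matrix (Fin n) (Fin m) ℂ) :
    Prop :=
  ∃ K₁ K₂ : Matrix (Fin m) (Fin n) ℂ, ∀ x : ℕ → (Fin n → ℂ),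
    (∀ k : ℕ, x (k + 1) =
        mconj A₂ *ᵥ star (x k) + mconj B₂ *ᵥ star (K₁ *ᵥ x k + mconj K₂ *ᵥ star (x k))) →
    Tendsto x atTop (𝓝 0)

/-- The trajectory of the antilinear system `x(k+1) = A₂^# x^#(k) + B₂^# u^#(k)` from
the initial condition `x₀` under the control sequence `u`. -/
def atraj (A₂ : Matrix (Fin n) (Fin n) ℂ) (B₂ : Matrix (Fin n) (Fin m) ℂ)
    (x₀ : Fin n → ℂ) (u : ℕ → Fin m → ℂ) : ℕ → Fin n → ℂ
  | 0 => x₀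
  | k + 1 => mconj A₂ *ᵥ star (atraj A₂ B₂ x₀ u k) + mconj B₂ *ᵥ star (u k)

/-- The quadratic cost `J = Σ_k (x(k)^H Q x(k) + u(k)^H R u(k))`, valued in `[0,∞]`. -/
def cost (Q : Matrix (Fin n) (Fin n) ℂ) (R : Matrix (Fin m) (Fin m) ℂ)
    (x : ℕ → Fin n → ℂ) (u : ℕ → Fin m → ℂ) : ℝ≥0∞ :=
  ∑' k : ℕ, ENNReal.ofReal ((star (x k) ⬝ᵥ (Q *ᵥ x k)).re + (star (u k) ⬝ᵥ (R *ᵥ u k)).re)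

/-- The LQR problem for the antilinear system is solvable: for every initial condition
there is a control of finite cost minimizing the cost. -/
def LQRSolvable (A₂ : Matrix (Fin n) (Fin n) ℂ) (B₂ : Matrix (Fin n) (Fin m) ℂ)
    (Q : Matrix (Fin n) (Fin n) ℂ) (R : Matrix (Fin m) (Fin m) ℂ) : Prop :=
  ∀ x₀ : Fin n → ℂ, ∃ u : ℕ → Fin m → ℂ,
    cost Q R (atraj A₂ B₂ x₀ u) u < ⊤ ∧
    ∀ u' : ℕ → Fin m → ℂ, cost Q R (atraj A₂ B₂ x₀ u) u ≤ cost Q R (atraj A₂ B₂ x₀ u') u'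

/-- The anti-Riccati equation
`-Q = A₂^H P^# A₂ - A₂^H P^# B₂ (R + B₂^H P^# B₂)⁻¹ B₂^H P^# A₂ - P`. -/
def AntiRiccati (A₂ : Matrix (Fin n) (Fin n) ℂ) (B₂ : Matrix (Fin n) (Fin m) ℂ)
    (Q : Matrix (Fin n) (Fin n) ℂ) (R : Matrix (Fin m) (Fin m) ℂ)
    (P : Matrix (Fin n) (Fin n) ℂ) : Prop :=
  -Q = A₂ᴴ * mconj P * A₂ -
      A₂ᴴ * mconj P * B₂ * (R + B₂ᴴ * mconj P * B₂)⁻¹ * (B₂ᴴ * mconj P * A₂) - P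

/-- The anti-Riccati iteration `P(0) = Q`,
`P(k+1) = Q + A₂^H (P(k)^{-#} + B₂ R⁻¹ B₂^H)⁻¹ A₂`. -/
def antiIter (A₂ : Matrix (Fin n) (Fin n) ℂ) (B₂ : Matrix (Fin n) (Fin m) ℂ)
    (Q : Matrix (Fin n) (Fin n) ℂ) (R : Matrix (Fin m) (Fin m) ℂ) :
    ℕ → Matrix (Fin n) (Fin n) ℂ
  | 0 => Q
  | k + 1 => Q + A₂ᴴ * ((mconj (antiIter A₂ B₂ Q R k))⁻¹ + B₂ * R⁻¹ * B₂ᴴ)⁻¹ * A₂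

lemma mconj_eq_transpose {A : Matrix (Fin n) (Fin n) ℂ} (h : A.IsHermitian) :
    mconj A = Aᵀ := by
  ext i j
  have h' := congrFun (congrFun h j) i
  simpa [mconj, Matrix.conjTranspose_apply] using h'

lemma posDef_mconj {A : Matrix (Fin n) (Fin n) ℂ} (h : A.PosDef) : (mconj A).PosDef := by
  rw [mconj_eq_transpose h.1]; exact h.transpose

lemma posSemidef_mconj {A : Matrix (Fin n) (Fin n) ℂ} (h : A.PosSemidef) :
    (mconj A).PosSemidef := by
  rw [mconj_eq_transpose h.1]; exact h.transpose

lemma mconj_sub (A B : Matrix (Fin n) (Fin n) ℂ) : mconj (A - B) = mconj A - mconj B := by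
  ext i j; simp [mconj]

lemma quad_real {A : Matrix (Fin n) (Fin n) ℂ} (h : A.IsHermitian) (v : Fin n → ℂ) :
    star v ⬝ᵥ (A *ᵥ v) = ((star v ⬝ᵥ (A *ᵥ v)).re : ℂ) := by
  rw [eq_comm, ← Complex.conj_eq_iff_re]
  calc (starRingEnd ℂ) (star v ⬝ᵥ (A *ᵥ v))
      = star (star v ⬝ᵥ (A *ᵥ v)) := rfl
    _ = star (A *ᵥ v) ⬝ᵥ v := by rw [star_dotProduct, star_star]
    _ = (star v ᵥ* Aᴴ) ⬝ᵥ v := by rw [star_mulVec]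
    _ = (star v ᵥ* A) ⬝ᵥ v := by rw [h.eq]
    _ = star v ⬝ᵥ (A *ᵥ v) := (dotProduct_mulVec _ _ _).symm

lemma inv_antitone {A B : Matrix (Fin n) (Fin n) ℂ} (hA : A.PosDef) (hB : B.PosDef)
    (h : (B - A).PosSemidef) : (A⁻¹ - B⁻¹).PosSemidef := by
  have hAd : IsUnit A.det := (Matrix.isUnit_iff_isUnit_det _).mp hA.isUnit
  have hBd : IsUnit B.det := (Matrix.isUnit_iff_isUnit_det _).mp hB.isUnit
  refine Matrix.PosSemidef.of_dotProduct_mulVec_nonneg (hA.inv.isHermitian.sub hB.inv.isHermitian) (fun x => ?_)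
  set u := A⁻¹ *ᵥ x with hu
  set y := B⁻¹ *ᵥ x with hy
  have h1 : A *ᵥ u = x := by
    rw [hu, Matrix.mulVec_mulVec, Matrix.mul_nonsing_inv _ hAd, Matrix.one_mulVec]
  have h2 : B *ᵥ y = x := by
    rw [hy, Matrix.mulVec_mulVec, Matrix.mul_nonsing_inv _ hBd, Matrix.one_mulVec]
  have h3 : star u ᵥ* A = star x := by
    conv_lhs => rw [← hA.isHermitian.eq]
    rw [← star_mulVec, h1]
  have s1 : star u ⬝ᵥ (A *ᵥ u) = star x ⬝ᵥ u := by
    rw [dotProduct_mulVec, h3]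
  have s2 : star u ⬝ᵥ (A *ᵥ y) = star x ⬝ᵥ y := by
    rw [dotProduct_mulVec, h3]
  have s3 : star y ⬝ᵥ (A *ᵥ u) = star y ⬝ᵥ x := by rw [h1]
  have s4 : star y ⬝ᵥ (B *ᵥ y) = star y ⬝ᵥ x := by rw [h2]
  have expand : star x ⬝ᵥ ((A⁻¹ - B⁻¹) *ᵥ x)
      = star (y - u) ⬝ᵥ (A *ᵥ (y - u)) + star y ⬝ᵥ ((B - A) *ᵥ y) := by
    simp only [Matrix.sub_mulVec, Matrix.mulVec_sub, star_sub, dotProduct_sub,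
      sub_dotProduct, ← hu, ← hy]
    linear_combination - s1 + s2 + s3 - s4
  rw [expand]
  exact add_nonneg (hA.posSemidef.dotProduct_mulVec_nonneg _) (h.dotProduct_mulVec_nonneg _)

lemma woodbury (X : Matrix (Fin n) (Fin n) ℂ) (B : Matrix (Fin n) (Fin m) ℂ)
    (R : Matrix (Fin m) (Fin m) ℂ) (hX : X.PosDef) (hR : R.PosDef) :
    (X⁻¹ + B * R⁻¹ * Bᴴ)⁻¹ = X - X * B * (R + Bᴴ * X * B)⁻¹ * (Bᴴ * X) := by
  have hT : (R + Bᴴ * X * B).PosDef :=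
    hR.add_posSemidef (hX.posSemidef.conjTranspose_mul_mul_same B)
  have hXd : IsUnit X.det := (Matrix.isUnit_iff_isUnit_det _).mp hX.isUnit
  have hRd : IsUnit R.det := (Matrix.isUnit_iff_isUnit_det _).mp hR.isUnit
  have hTd : IsUnit (R + Bᴴ * X * B).det := (Matrix.isUnit_iff_isUnit_det _).mp hT.isUnit
  apply Matrix.inv_eq_right_inv
  set T := R + Bᴴ * X * B with hTdef
  have key : Bᴴ * (X * (B * (T⁻¹ * (Bᴴ * X))))
      = T * (T⁻¹ * (Bᴴ * X)) - R * (T⁻¹ * (Bᴴ * X)) := by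
    rw [hTdef]
    simp only [Matrix.add_mul, Matrix.mul_assoc]
    abel
  simp only [Matrix.add_mul, Matrix.mul_sub, Matrix.mul_assoc,
    Matrix.nonsing_inv_mul _ hXd, Matrix.nonsing_inv_mul_cancel_left _ _ hXd, key,
    Matrix.mul_nonsing_inv_cancel_left _ _ hTd, Matrix.nonsing_inv_mul_cancel_left _ _ hRd]
  abel

lemma antiRiccati_iff_fixed (A₂ : Matrix (Fin n) (Fin n) ℂ) (B₂ : Matrix (Fin n) (Fin m) ℂ)
    (Q : Matrix (Fin n) (Fin n) ℂ) (R : Matrix (Fin m) (Fin m) ℂ)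
    (X : Matrix (Fin n) (Fin n) ℂ) (hX : X.PosDef) (hR : R.PosDef) :
    AntiRiccati A₂ B₂ Q R X ↔
      X = Q + A₂ᴴ * ((mconj X)⁻¹ + B₂ * R⁻¹ * B₂ᴴ)⁻¹ * A₂ := by
  have hw := woodbury (mconj X) B₂ R (posDef_mconj hX) hR
  have key : Q + A₂ᴴ * ((mconj X)⁻¹ + B₂ * R⁻¹ * B₂ᴴ)⁻¹ * A₂
      = Q + (A₂ᴴ * mconj X * A₂ -
          A₂ᴴ * mconj X * B₂ * (R + B₂ᴴ * mconj X * B₂)⁻¹ * (B₂ᴴ * mconj X * A₂)) := by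
    rw [hw]
    simp only [Matrix.mul_sub, Matrix.sub_mul, Matrix.mul_assoc]
  rw [AntiRiccati, key]
  constructor
  · intro h
    have h2 : A₂ᴴ * mconj X * A₂ -
        A₂ᴴ * mconj X * B₂ * (R + B₂ᴴ * mconj X * B₂)⁻¹ * (B₂ᴴ * mconj X * A₂)
        = -Q + X := sub_eq_iff_eq_add.mp h.symm
    rw [h2]; abel
  · intro h
    have h2 : A₂ᴴ * mconj X * A₂ -
        A₂ᴴ * mconj X * B₂ * (R + B₂ᴴ * mconj X * B₂)⁻¹ * (B₂ᴴ * mconj X * A₂)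
        = X - Q := eq_sub_of_add_eq' h.symm
    rw [h2]; abel

lemma quad_single (M : Matrix (Fin n) (Fin n) ℂ) (p q : Fin n) :
    star (Pi.single p (1:ℂ)) ⬝ᵥ (M *ᵥ Pi.single q 1) = M p q := by
  have hs : star (Pi.single p (1:ℂ)) = (Pi.single p 1 : Fin n → ℂ) := by
    ext a; simp [Pi.single_apply, apply_ite]
  rw [hs, Matrix.mulVec_single, single_dotProduct]
  simp

lemma quad_expand (M : Matrix (Fin n) (Fin n) ℂ) (a b : ℂ) (i j : Fin n) :
    star (a • (Pi.single i 1 : Fin n → ℂ) + b • (Pi.single j 1 : Fin n → ℂ)) ⬝ᵥ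
        (M *ᵥ (a • (Pi.single i 1 : Fin n → ℂ) + b • (Pi.single j 1 : Fin n → ℂ)))
      = star a * a * M i i + star a * b * M i j + star b * a * M j i + star b * b * M j j := by
  simp only [star_add, star_smul, Matrix.mulVec_add, Matrix.mulVec_smul,
    dotProduct_add, add_dotProduct, smul_dotProduct, dotProduct_smul, quad_single,
    smul_eq_mul]
  ring

lemma entry_eq (M : Matrix (Fin n) (Fin n) ℂ) (i j : Fin n) :
    M i j = ((star ((Pi.single i 1 : Fin n → ℂ) + (Pi.single j 1 : Fin n → ℂ)) ⬝ᵥ (M *ᵥ ((Pi.single i 1 : Fin n → ℂ) + (Pi.single j 1 : Fin n → ℂ)))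
        - star ((Pi.single i 1 : Fin n → ℂ)) ⬝ᵥ (M *ᵥ (Pi.single i 1 : Fin n → ℂ))
        - star ((Pi.single j 1 : Fin n → ℂ)) ⬝ᵥ (M *ᵥ (Pi.single j 1 : Fin n → ℂ)))
      - Complex.I * (star ((Pi.single i 1 : Fin n → ℂ) + Complex.I • (Pi.single j 1 : Fin n → ℂ)) ⬝ᵥ
          (M *ᵥ ((Pi.single i 1 : Fin n → ℂ) + Complex.I • (Pi.single j 1 : Fin n → ℂ)))
        - star ((Pi.single i 1 : Fin n → ℂ)) ⬝ᵥ (M *ᵥ (Pi.single i 1 : Fin n → ℂ))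
        - star ((Pi.single j 1 : Fin n → ℂ)) ⬝ᵥ (M *ᵥ (Pi.single j 1 : Fin n → ℂ)))) / 2 := by
  have h1 : (Pi.single i 1 : Fin n → ℂ) + (Pi.single j 1 : Fin n → ℂ)
      = (1:ℂ) • (Pi.single i 1 : Fin n → ℂ) + (1:ℂ) • (Pi.single j 1 : Fin n → ℂ) := by simp
  have h2 : (Pi.single i 1 : Fin n → ℂ) + Complex.I • (Pi.single j 1 : Fin n → ℂ)
      = (1:ℂ) • (Pi.single i 1 : Fin n → ℂ) + Complex.I • (Pi.single j 1 : Fin n → ℂ) := by simp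
  rw [h1, h2, quad_expand, quad_expand, quad_single, quad_single]
  simp only [star_one, one_mul, mul_one, RCLike.star_def, _root_.map_one, Complex.conj_I]
  linear_combination ((M i j - M j i - Complex.I * M j j)/2) * Complex.I_sq


/-- If the antilinear system is stabilizable and `P` is the unique
Hermitian positive definite solution of the anti-Riccati equation, then the anti-Riccati
iteration is well defined (each iterate is Hermitian positive definite) and converges to
`P` entrywise. -/
theorem antiIter_tendsto
    (A₂ : Matrix (Fin n) (Fin n) ℂ) (B₂ : Matrix (Fin n) (Fin m) ℂ)
    (Q : Matrix (Fin n) (Fin n) ℂ) (R : Matrix (Fin m) (Fin m) ℂ)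
    (hQ : Q.PosDef) (hR : R.PosDef)
    (hstab : AntiStabilizable A₂ B₂)
    (P : Matrix (Fin n) (Fin n) ℂ) (hP : P.PosDef ∧ AntiRiccati A₂ B₂ Q R P)
    (huniq : ∀ P' : Matrix (Fin n) (Fin n) ℂ,
      P'.PosDef ∧ AntiRiccati A₂ B₂ Q R P' → P' = P) :
    (∀ k : ℕ, (antiIter A₂ B₂ Q R k).PosDef) ∧
    Tendsto (fun k => antiIter A₂ B₂ Q R k) atTop (𝓝 P) := by
  classical
  obtain ⟨hPpos, hPric⟩ := hP
  set S : Matrix (Fin n) (Fin n) ℂ := B₂ * R⁻¹ * B₂ᴴ with hSdef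
  have hSpsd : S.PosSemidef := hR.inv.posSemidef.mul_mul_conjTranspose_same B₂
  set M : ℕ → Matrix (Fin n) (Fin n) ℂ := antiIter A₂ B₂ Q R with hMdef
  have hstep : ∀ k, M (k+1) = Q + A₂ᴴ * ((mconj (M k))⁻¹ + S)⁻¹ * A₂ := fun k => rfl
  have hM0 : M 0 = Q := rfl
  have hWpos : ∀ X : Matrix (Fin n) (Fin n) ℂ, X.PosDef → ((mconj X)⁻¹ + S).PosDef :=
    fun X hX => (posDef_mconj hX).inv.add_posSemidef hSpsd
  have hFpsd : ∀ X : Matrix (Fin n) (Fin n) ℂ, X.PosDef →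
      (A₂ᴴ * ((mconj X)⁻¹ + S)⁻¹ * A₂).PosSemidef :=
    fun X hX => ((hWpos X hX).inv.posSemidef).conjTranspose_mul_mul_same A₂
  have hFmono : ∀ X Y : Matrix (Fin n) (Fin n) ℂ, X.PosDef → Y.PosDef → (Y - X).PosSemidef →
      ((Q + A₂ᴴ * ((mconj Y)⁻¹ + S)⁻¹ * A₂)
        - (Q + A₂ᴴ * ((mconj X)⁻¹ + S)⁻¹ * A₂)).PosSemidef := by
    intro X Y hX hY hXY
    have hcm : (mconj Y - mconj X).PosSemidef := by
      rw [← mconj_sub]; exact posSemidef_mconj hXY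
    have h1 : ((mconj X)⁻¹ - (mconj Y)⁻¹).PosSemidef :=
      inv_antitone (posDef_mconj hX) (posDef_mconj hY) hcm
    have h2 : (((mconj X)⁻¹ + S) - ((mconj Y)⁻¹ + S)).PosSemidef := by
      simpa [add_sub_add_right_eq_sub] using h1
    have h3 : ((((mconj Y)⁻¹ + S)⁻¹) - (((mconj X)⁻¹ + S)⁻¹)).PosSemidef :=
      inv_antitone (hWpos Y hY) (hWpos X hX) h2
    have h4 := h3.conjTranspose_mul_mul_same A₂
    have heq : (Q + A₂ᴴ * ((mconj Y)⁻¹ + S)⁻¹ * A₂)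
        - (Q + A₂ᴴ * ((mconj X)⁻¹ + S)⁻¹ * A₂)
        = A₂ᴴ * ((((mconj Y)⁻¹ + S)⁻¹) - (((mconj X)⁻¹ + S)⁻¹)) * A₂ := by
      simp only [Matrix.mul_sub, Matrix.sub_mul]
      abel
    rw [heq]; exact h4
  have hpos : ∀ k, (M k).PosDef := by
    intro k; induction k with
    | zero => exact hQ
    | succ k ih =>
      rw [hstep]
      exact hQ.add_posSemidef (hFpsd _ ih)
  have hfixP : P = Q + A₂ᴴ * ((mconj P)⁻¹ + S)⁻¹ * A₂ :=
    (antiRiccati_iff_fixed A₂ B₂ Q R P hPpos hR).mp hPric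
  have hbdd : ∀ k, (P - M k).PosSemidef := by
    intro k; induction k with
    | zero =>
      have heq : P - M 0 = A₂ᴴ * ((mconj P)⁻¹ + S)⁻¹ * A₂ := by
        rw [hM0]; nth_rewrite 1 [hfixP]; rw [add_sub_cancel_left]
      rw [heq]; exact hFpsd P hPpos
    | succ k ih =>
      have h := hFmono (M k) P (hpos k) hPpos ih
      rw [← hfixP] at h
      rw [hstep]; exact h
  have hmono : ∀ k, (M (k+1) - M k).PosSemidef := by
    intro k; induction k with
    | zero =>
      have heq : M 1 - M 0 = A₂ᴴ * ((mconj (M 0))⁻¹ + S)⁻¹ * A₂ := by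
        rw [hstep, hM0, add_sub_cancel_left]
      rw [heq]; exact hFpsd _ (hpos 0)
    | succ k ih =>
      have h := hFmono (M k) (M (k+1)) (hpos k) (hpos (k+1)) ih
      rw [← hstep, ← hstep] at h
      exact h
  -- quadratic forms converge
  have hqmono : ∀ v : Fin n → ℂ, Monotone (fun k => (star v ⬝ᵥ (M k *ᵥ v)).re) := by
    intro v
    apply monotone_nat_of_le_succ
    intro k
    have h0 := (hmono k).dotProduct_mulVec_nonneg v
    rw [Matrix.sub_mulVec, dotProduct_sub] at h0
    have h1 := (Complex.le_def.mp h0).1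
    simp only [Complex.sub_re, Complex.zero_re] at h1
    linarith
  have hqbdd : ∀ (v : Fin n → ℂ) k, (star v ⬝ᵥ (M k *ᵥ v)).re ≤ (star v ⬝ᵥ (P *ᵥ v)).re := by
    intro v k
    have h0 := (hbdd k).dotProduct_mulVec_nonneg v
    rw [Matrix.sub_mulVec, dotProduct_sub] at h0
    have h1 := (Complex.le_def.mp h0).1
    simp only [Complex.sub_re, Complex.zero_re] at h1
    linarith
  have hex : ∀ v : Fin n → ℂ, ∃ r : ℝ,
      Tendsto (fun k => (star v ⬝ᵥ (M k *ᵥ v)).re) atTop (𝓝 r) := by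
    intro v
    refine ⟨_, tendsto_atTop_ciSup (hqmono v) ⟨(star v ⬝ᵥ (P *ᵥ v)).re, ?_⟩⟩
    rintro x ⟨k, rfl⟩
    exact hqbdd v k
  choose c hc using hex
  have hqrealconv : ∀ v : Fin n → ℂ,
      Tendsto (fun k => star v ⬝ᵥ (M k *ᵥ v)) atTop (𝓝 ((c v : ℂ))) := by
    intro v
    have h2 := (Complex.continuous_ofReal.tendsto (c v)).comp (hc v)
    exact h2.congr (fun k => (quad_real (hpos k).1 v).symm)
  set L : Matrix (Fin n) (Fin n) ℂ := fun i j =>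
    (((c ((Pi.single i 1 : Fin n → ℂ) + (Pi.single j 1 : Fin n → ℂ)) : ℂ)
        - (c (Pi.single i 1 : Fin n → ℂ) : ℂ) - (c (Pi.single j 1 : Fin n → ℂ) : ℂ))
      - Complex.I * ((c ((Pi.single i 1 : Fin n → ℂ) + Complex.I • (Pi.single j 1 : Fin n → ℂ)) : ℂ)
        - (c (Pi.single i 1 : Fin n → ℂ) : ℂ) - (c (Pi.single j 1 : Fin n → ℂ) : ℂ))) / 2
    with hLdef
  have hLconv : Tendsto M atTop (𝓝 L) := by
    refine tendsto_pi_nhds.mpr ?_; intro i; refine tendsto_pi_nhds.mpr ?_; intro j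
    have t1 := hqrealconv ((Pi.single i 1 : Fin n → ℂ) + (Pi.single j 1 : Fin n → ℂ))
    have t2 := hqrealconv (Pi.single i 1 : Fin n → ℂ)
    have t3 := hqrealconv (Pi.single j 1 : Fin n → ℂ)
    have t4 := hqrealconv ((Pi.single i 1 : Fin n → ℂ) + Complex.I • (Pi.single j 1 : Fin n → ℂ))
    have tt : Tendsto (fun k =>
        ((star ((Pi.single i 1 : Fin n → ℂ) + (Pi.single j 1 : Fin n → ℂ)) ⬝ᵥ
            (M k *ᵥ ((Pi.single i 1 : Fin n → ℂ) + (Pi.single j 1 : Fin n → ℂ)))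
          - star (Pi.single i 1 : Fin n → ℂ) ⬝ᵥ (M k *ᵥ (Pi.single i 1 : Fin n → ℂ))
          - star (Pi.single j 1 : Fin n → ℂ) ⬝ᵥ (M k *ᵥ (Pi.single j 1 : Fin n → ℂ)))
        - Complex.I * (star ((Pi.single i 1 : Fin n → ℂ) + Complex.I • (Pi.single j 1 : Fin n → ℂ)) ⬝ᵥ
            (M k *ᵥ ((Pi.single i 1 : Fin n → ℂ) + Complex.I • (Pi.single j 1 : Fin n → ℂ)))
          - star (Pi.single i 1 : Fin n → ℂ) ⬝ᵥ (M k *ᵥ (Pi.single i 1 : Fin n → ℂ))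
          - star (Pi.single j 1 : Fin n → ℂ) ⬝ᵥ (M k *ᵥ (Pi.single j 1 : Fin n → ℂ)))) / 2)
        atTop (𝓝 (L i j)) := by
      rw [hLdef]
      exact (((t1.sub t2).sub t3).sub (tendsto_const_nhds.mul ((t4.sub t2).sub t3))).div_const 2
    exact tt.congr (fun k => (entry_eq (M k) i j).symm)
  have hent : ∀ i j, Tendsto (fun k => M k i j) atTop (𝓝 (L i j)) := by
    intro i j
    exact tendsto_pi_nhds.mp (tendsto_pi_nhds.mp hLconv i) j
  have hQfL : ∀ v : Fin n → ℂ, star v ⬝ᵥ (L *ᵥ v) = (c v : ℂ) := by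
    intro v
    have hcont : Continuous (fun N : Matrix (Fin n) (Fin n) ℂ => star v ⬝ᵥ (N *ᵥ v)) :=
      continuous_const.dotProduct (continuous_id.matrix_mulVec continuous_const)
    exact tendsto_nhds_unique ((hcont.tendsto L).comp hLconv) (hqrealconv v)
  have hLherm : L.IsHermitian := by
    ext i j
    have t1 : Tendsto (fun k => star (M k j i)) atTop (𝓝 (star (L j i))) :=
      (continuous_star.tendsto (L j i)).comp (hent j i)
    have t2 : Tendsto (fun k => star (M k j i)) atTop (𝓝 (L i j)) := by
      refine (hent i j).congr (fun k => ?_)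
      have hh := (hpos k).1
      calc M k i j = (M k)ᴴ i j := by rw [hh]
        _ = star (M k j i) := rfl
    have := tendsto_nhds_unique t1 t2
    simpa [Matrix.conjTranspose_apply] using this
  have hLposd : L.PosDef := by
    refine Matrix.PosDef.of_dotProduct_mulVec_pos hLherm (fun x hx => ?_)
    rw [hQfL x, Complex.zero_lt_real]
    have h1 : (star x ⬝ᵥ (M 0 *ᵥ x)).re ≤ c x := (hqmono x).ge_of_tendsto (hc x) 0
    have h2 : 0 < (star x ⬝ᵥ (Q *ᵥ x)).re := by
      have h3 := hQ.dotProduct_mulVec_pos hx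
      have h4 := (Complex.lt_def.mp h3).1
      simpa using h4
    rw [hM0] at h1
    linarith
  have hcontF : ContinuousAt
      (fun X : Matrix (Fin n) (Fin n) ℂ => Q + A₂ᴴ * ((mconj X)⁻¹ + S)⁻¹ * A₂) L := by
    have hmc : Continuous (fun X : Matrix (Fin n) (Fin n) ℂ => mconj X) :=
      continuous_id.matrix_map Complex.continuous_conj
    have hud1 : IsUnit (mconj L).det :=
      (Matrix.isUnit_iff_isUnit_det _).mp (posDef_mconj hLposd).isUnit
    have hinv1 : ContinuousAt Inv.inv (mconj L) :=
      continuousAt_matrix_inv _ (hud1.unit_spec ▸ NormedRing.inverse_continuousAt hud1.unit)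
    have hud2 : IsUnit ((mconj L)⁻¹ + S).det :=
      (Matrix.isUnit_iff_isUnit_det _).mp (hWpos L hLposd).isUnit
    have hinv2 : ContinuousAt Inv.inv ((mconj L)⁻¹ + S) :=
      continuousAt_matrix_inv _ (hud2.unit_spec ▸ NormedRing.inverse_continuousAt hud2.unit)
    have g1 : ContinuousAt (fun X : Matrix (Fin n) (Fin n) ℂ => mconj X) L := hmc.continuousAt
    have g2 : ContinuousAt (fun X : Matrix (Fin n) (Fin n) ℂ => (mconj X)⁻¹) L := hinv1.comp g1
    have g3 : ContinuousAt (fun X : Matrix (Fin n) (Fin n) ℂ => (mconj X)⁻¹ + S) L :=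
      g2.add continuousAt_const
    have g4 : ContinuousAt (fun X : Matrix (Fin n) (Fin n) ℂ => ((mconj X)⁻¹ + S)⁻¹) L :=
      ContinuousAt.comp (g := Inv.inv)
        (f := fun X : Matrix (Fin n) (Fin n) ℂ => (mconj X)⁻¹ + S) hinv2 g3
    exact continuousAt_const.add ((continuousAt_const.mul g4).mul continuousAt_const)
  have hfixL : L = Q + A₂ᴴ * ((mconj L)⁻¹ + S)⁻¹ * A₂ := by
    have t1 : Tendsto (fun k => M (k+1)) atTop (𝓝 L) := hLconv.comp (tendsto_add_atTop_nat 1)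
    have t2 : Tendsto (fun k => Q + A₂ᴴ * ((mconj (M k))⁻¹ + S)⁻¹ * A₂) atTop
        (𝓝 (Q + A₂ᴴ * ((mconj L)⁻¹ + S)⁻¹ * A₂)) := hcontF.tendsto.comp hLconv
    exact tendsto_nhds_unique (t1.congr hstep) t2
  have hLric : AntiRiccati A₂ B₂ Q R L :=
    (antiRiccati_iff_fixed A₂ B₂ Q R L hLposd hR).mpr hfixL
  have hLP : L = P := huniq L ⟨hLposd, hLric⟩
  exact ⟨hpos, hLP ▸ hLconv⟩
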